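/- Let α be irrational with partial quotients a_n, convergents p_n/q_n, and z_n = q_nα − p_n; let n be even. On ℝ/ℤ define I_n^0 = [0, |z_{n+1}|), I_n^i = [|z_n| − (i−1)|z_{n+1}|, |z_n| − (i−2)|z_{n+1}|) for 1 ≤ i ≤ a_{n+2}, and I_n^* = [|z_{n+1}|, |z_{n+1}| + |z_{n+2}|), and let T x = x + α (mod 1). Then: T^{q_n}(I_n^0) = I_n^1; T^{q_{n+1}}(I_n^i) = I_n^{i+1} for i = 1, …, a_{n+2} − 1; T^{q_{n+1}}(I_n^{a_{n+2}}) ⊆ I_n^* ∪ I_n^0; and T^{q_{n+1}}(I_n^*) ⊆ I_n^0. -/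

import Mathlib

/-- Gauss map iterates of `α`: `x₀ = {α}`, `x_{n+1} = {1/x_n}`. -/
noncomputable def gaussIter (α : ℝ) : ℕ → ℝ
  | 0 => Int.fract α
  | n + 1 => Int.fract (gaussIter α n)⁻¹

/-- `cfa α n` is the partial quotient `a_{n+1} = ⌊1/x_n⌋` of the continued fraction of `α`. -/
noncomputable def cfa (α : ℝ) (n : ℕ) : ℕ := ⌊(gaussIter α n)⁻¹⌋₊

/-- Denominators `q_n` of the continued fraction convergents of `α`:
`q₀ = 1`, `q₁ = a₁`, `q_{n+2} = a_{n+2} q_{n+1} + q_n`. -/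
noncomputable def cfq (α : ℝ) : ℕ → ℕ
  | 0 => 1
  | 1 => cfa α 0
  | n + 2 => cfa α (n + 1) * cfq α (n + 1) + cfq α n

/-- Numerators `p_n` of the continued fraction convergents of `α`:
`p₀ = ⌊α⌋`, `p₁ = a₁⌊α⌋ + 1`, `p_{n+2} = a_{n+2} p_{n+1} + p_n`. -/
noncomputable def cfp (α : ℝ) : ℕ → ℤ
  | 0 => ⌊α⌋
  | 1 => cfa α 0 * ⌊α⌋ + 1
  | n + 2 => cfa α (n + 1) * cfp α (n + 1) + cfp α n

/-- `z_n = q_n α - p_n`. -/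
noncomputable def cfz (α : ℝ) (n : ℕ) : ℝ := (cfq α n : ℝ) * α - (cfp α n : ℝ)

/-- The arc `[c, d) (mod 1)` on the circle `ℝ/ℤ`. -/
noncomputable def arc (c d : ℝ) : Set (AddCircle (1 : ℝ)) :=
  (fun t : ℝ => (t : AddCircle (1 : ℝ))) '' Set.Ico c d

lemma fract_irr {x : ℝ} (h : Irrational x) : Irrational (Int.fract x) := by
  rw [Int.fract]; exact h.sub_intCast _

lemma gauss_prop (α : ℝ) (hα : Irrational α) :
    ∀ n, Irrational (gaussIter α n) ∧ gaussIter α n ∈ Set.Ioo (0:ℝ) 1 := by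
  intro n
  induction n with
  | zero =>
    refine ⟨fract_irr hα, ?_, Int.fract_lt_one _⟩
    rcases lt_or_eq_of_le (Int.fract_nonneg α) with h | h
    · exact h
    · exact absurd (h ▸ (fract_irr hα)) (by simp)
  | succ n ih =>
    have hirr : Irrational (gaussIter α n)⁻¹ := ih.1.inv
    refine ⟨fract_irr hirr, ?_, Int.fract_lt_one _⟩
    rcases lt_or_eq_of_le (Int.fract_nonneg (gaussIter α n)⁻¹) with h | h
    · exact h
    · exact absurd (h ▸ (fract_irr hirr)) (by simp)

lemma cfa_cast (α : ℝ) (hα : Irrational α) (m : ℕ) :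
    (cfa α m : ℝ) = ⌊(gaussIter α m)⁻¹⌋ := by
  have h := (gauss_prop α hα m).2.1
  exact natCast_floor_eq_intCast_floor (by positivity)

/-- key relation: x_{m+1} * x_m = 1 - a_m * x_m -/
lemma gauss_rel (α : ℝ) (hα : Irrational α) (m : ℕ) :
    gaussIter α m * gaussIter α (m+1) = 1 - (cfa α m : ℝ) * gaussIter α m := by
  have hx := (gauss_prop α hα m).2.1
  have : gaussIter α (m+1) = (gaussIter α m)⁻¹ - ⌊(gaussIter α m)⁻¹⌋ := rfl
  rw [this, cfa_cast α hα m, mul_sub, mul_inv_cancel₀ (ne_of_gt hx)]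
  ring

lemma cfz_rec (α : ℝ) (n : ℕ) :
    cfz α (n+2) = (cfa α (n+1) : ℝ) * cfz α (n+1) + cfz α n := by
  simp only [cfz, cfq, cfp]
  push_cast
  ring

lemma cfz_formula (α : ℝ) (hα : Irrational α) :
    ∀ n, cfz α n = (-1)^n * ∏ k ∈ Finset.range (n+1), gaussIter α k := by
  intro n
  induction n using Nat.twoStepInduction with
  | zero =>
    show (cfq α 0 : ℝ) * α - (cfp α 0 : ℝ) = _
    rw [Finset.prod_range_one]
    show ((1:ℕ) : ℝ) * α - ((⌊α⌋ : ℤ) : ℝ) = (-1)^0 * Int.fract α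
    rw [Int.fract]; push_cast; ring
  | one =>
    have h := gauss_rel α hα 0
    simp only [cfz, cfq, cfp]
    push_cast
    rw [Finset.prod_range_succ, Finset.prod_range_one]
    have h0 : gaussIter α 0 = α - ⌊α⌋ := rfl
    nlinarith [h, h0]
  | more n ih1 ih2 =>
    rw [cfz_rec, ih1, ih2]
    have h : gaussIter α (n+1) * gaussIter α (n+2)
        = 1 - (cfa α (n+1) : ℝ) * gaussIter α (n+1) := gauss_rel α hα (n+1)
    rw [Finset.prod_range_succ (n := n+2), Finset.prod_range_succ (n := n+1)]
    linear_combination (-(-1:ℝ)^n * (∏ k ∈ Finset.range (n+1), gaussIter α k)) * h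

lemma cfz_abs (α : ℝ) (hα : Irrational α) (m : ℕ) :
    |cfz α m| = ∏ k ∈ Finset.range (m+1), gaussIter α k := by
  have hP : 0 < ∏ k ∈ Finset.range (m+1), gaussIter α k :=
    Finset.prod_pos fun i _ => (gauss_prop α hα i).2.1
  rw [cfz_formula α hα m, abs_mul, abs_pow, abs_neg, abs_one, one_pow, one_mul,
    abs_of_pos hP]

lemma cfz_abs_pos (α : ℝ) (hα : Irrational α) (m : ℕ) : 0 < |cfz α m| := by
  rw [cfz_abs α hα m]
  exact Finset.prod_pos fun i _ => (gauss_prop α hα i).2.1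

lemma cfz_abs_lt (α : ℝ) (hα : Irrational α) (m : ℕ) :
    |cfz α (m+1)| < |cfz α m| := by
  rw [cfz_abs α hα m, cfz_abs α hα (m+1), Finset.prod_range_succ]
  have hP : 0 < ∏ k ∈ Finset.range (m+1), gaussIter α k :=
    Finset.prod_pos fun i _ => (gauss_prop α hα i).2.1
  nlinarith [(gauss_prop α hα (m+1)).2.2, hP]

lemma cfz_even (α : ℝ) (hα : Irrational α) {m : ℕ} (hm : Even m) :
    cfz α m = |cfz α m| := by
  rw [cfz_abs α hα m, cfz_formula α hα m, hm.neg_one_pow, one_mul]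

lemma cfz_odd (α : ℝ) (hα : Irrational α) {m : ℕ} (hm : Odd m) :
    cfz α m = -|cfz α m| := by
  rw [cfz_abs α hα m, cfz_formula α hα m, hm.neg_one_pow, neg_one_mul]

lemma arc_add (c d t : ℝ) :
    (fun y : AddCircle (1:ℝ) => y + ((t : ℝ) : AddCircle (1:ℝ))) '' arc c d
      = arc (c + t) (d + t) := by
  unfold arc
  rw [Set.image_image, ← Set.image_add_const_Ico t c d, Set.image_image]
  exact Set.image_congr' (fun x => (AddCircle.coe_add (p := (1:ℝ)) x t).symm)

lemma arc_mono {c d c' d' : ℝ} (h1 : c' ≤ c) (h2 : d ≤ d') :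
    arc c d ⊆ arc c' d' := Set.image_mono (Set.Ico_subset_Ico h1 h2)

lemma arc_union {b c : ℝ} (h1 : 0 ≤ b) (h2 : b ≤ c) :
    arc 0 c = arc 0 b ∪ arc b c := by
  unfold arc
  rw [← Set.image_union, Set.Ico_union_Ico_eq_Ico h1 h2]

lemma key_lemma (α : ℝ) (Tpow : ℕ → AddCircle (1 : ℝ) → AddCircle (1 : ℝ))
    (hT : ∀ k y, Tpow k y = y + (((k : ℝ) * α : ℝ) : AddCircle (1 : ℝ)))
    (m : ℕ) (c d : ℝ) :
    Tpow (cfq α m) '' arc c d = arc (c + cfz α m) (d + cfz α m) := by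
  have h1 : ∀ y, Tpow (cfq α m) y = y + ((cfz α m : ℝ) : AddCircle (1:ℝ)) := by
    intro y
    rw [hT]
    congr 1
    have he : ((cfq α m : ℕ) : ℝ) * α = cfz α m + ((cfp α m : ℤ) : ℝ) := by
      simp [cfz]
    rw [he, AddCircle.coe_add]
    have hz : (((cfp α m : ℤ) : ℝ) : AddCircle (1:ℝ)) = 0 := by
      rw [AddCircle.coe_eq_zero_iff]
      exact ⟨cfp α m, by simp⟩
    rw [hz, add_zero]
  rw [show Tpow (cfq α m) = fun y => y + ((cfz α m : ℝ) : AddCircle (1:ℝ)) from funext h1]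
  exact arc_add c d (cfz α m)


/-- Precise images of the subintervals `I_n⁰`, `I_nⁱ`, `I_n^*` of `I_n` under the first
return maps `T^{q_n}` and `T^{q_{n+1}}` (for even `n`); here `a_{n+2} = cfa α (n+1)`. -/
theorem statement13 (α : ℝ) (hα : Irrational α) (n : ℕ) (hn : Even n)
    (In0 : Set (AddCircle (1 : ℝ))) (hIn0 : In0 = arc 0 |cfz α (n + 1)|)
    (Ini : ℕ → Set (AddCircle (1 : ℝ)))
    (hIni : ∀ i : ℕ, Ini i =
      arc (|cfz α n| - ((i : ℝ) - 1) * |cfz α (n + 1)|)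
          (|cfz α n| - ((i : ℝ) - 2) * |cfz α (n + 1)|))
    (Instar : Set (AddCircle (1 : ℝ)))
    (hInstar : Instar = arc (|cfz α (n + 1)|) (|cfz α (n + 1)| + |cfz α (n + 2)|))
    (Tpow : ℕ → AddCircle (1 : ℝ) → AddCircle (1 : ℝ))
    (hT : ∀ k y, Tpow k y = y + (((k : ℝ) * α : ℝ) : AddCircle (1 : ℝ))) :
    Tpow (cfq α n) '' In0 = Ini 1 ∧
    (∀ i : ℕ, 1 ≤ i → i + 1 ≤ cfa α (n + 1) → Tpow (cfq α (n + 1)) '' Ini i = Ini (i + 1)) ∧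
    Tpow (cfq α (n + 1)) '' Ini (cfa α (n + 1)) ⊆ Instar ∪ In0 ∧
    Tpow (cfq α (n + 1)) '' Instar ⊆ In0 := by
  have hn2 : Even (n + 2) := by rcases hn with ⟨r, rfl⟩; exact ⟨r + 1, by ring⟩
  have hn1 : Odd (n + 1) := Even.add_one hn
  set A := |cfz α n| with hAdef
  set B := |cfz α (n + 1)| with hBdef
  set C := |cfz α (n + 2)| with hCdef
  have hA : cfz α n = A := cfz_even α hα hn
  have hB : cfz α (n + 1) = -B := cfz_odd α hα hn1
  have hC : cfz α (n + 2) = C := cfz_even α hα hn2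
  have hrec : C = -(cfa α (n + 1) : ℝ) * B + A := by
    have := cfz_rec α n
    rw [hA, hB, hC] at this
    linarith
  have hBpos : 0 < B := cfz_abs_pos α hα (n + 1)
  have hCpos : 0 < C := cfz_abs_pos α hα (n + 2)
  have hCB : C < B := cfz_abs_lt α hα (n + 1)
  refine ⟨?_, ?_, ?_, ?_⟩
  · rw [hIn0, hIni 1, key_lemma α Tpow hT n]
    congr 1 <;> (rw [hA]; push_cast; ring)
  · intro i _ _
    rw [hIni i, hIni (i + 1), key_lemma α Tpow hT (n + 1)]
    congr 1 <;> (rw [hB]; push_cast; ring)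
  · rw [hIni (cfa α (n + 1)), key_lemma α Tpow hT (n + 1), hInstar, hIn0,
      show A - ((cfa α (n + 1) : ℝ) - 1) * B + cfz α (n + 1) = C by rw [hB]; linarith,
      show A - ((cfa α (n + 1) : ℝ) - 2) * B + cfz α (n + 1) = C + B by rw [hB]; linarith]
    intro x hx
    have hsub : arc C (C + B) ⊆ arc 0 (B + C) :=
      arc_mono (le_of_lt hCpos) (by linarith)
    have hmem := hsub hx
    rw [arc_union (le_of_lt hBpos) (by linarith : B ≤ B + C)] at hmem
    exact hmem.elim Or.inr Or.inl
  · rw [hInstar, hIn0, key_lemma α Tpow hT (n + 1),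
      show B + cfz α (n + 1) = 0 by rw [hB]; ring,
      show B + C + cfz α (n + 1) = C by rw [hB]; ring]
    exact arc_mono le_rfl (le_of_lt hCB)
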